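/- For every Young diagram μ with |μ| = m and every Young diagram ν with |ν| = n+1 (where n ≥ 0), one has ∑_{κ : κ ↗ ν} (dim κ / dim ν) · FS_μ(κ) = ((n+1−m)/(n+1)) · FS_μ(ν). (This says that the 'down' transition operator p↓(ν,κ) = dim κ/dim ν maps the restriction of the Frobenius–Schur function FS_μ to diagrams with n boxes to ((n+1−m)/(n+1)) times its restriction to diagrams with n+1 boxes.) -/

import Mathlib

/-- `μ ↗ ν` : the Young diagram `ν` is obtained from `μ` by adding one box. -/
def YoungDiagram.Covers (μ ν : YoungDiagram) : Prop :=
  μ ≤ ν ∧ ν.card = μ.card + 1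

/-- `dim(μ,λ)`: the number of saturated chains `μ = ν₀ ↗ ν₁ ↗ … ↗ ν_{|λ|-|μ|} = λ`
(the number of standard Young tableaux of skew shape `λ/μ`); it vanishes when `μ ⊄ λ`. -/
noncomputable def YoungDiagram.skewDim (μ l : YoungDiagram) : ℕ :=
  Nat.card {f : Fin (l.card - μ.card + 1) → YoungDiagram //
    f 0 = μ ∧ f (Fin.last _) = l ∧
    ∀ i : Fin (l.card - μ.card), YoungDiagram.Covers (f i.castSucc) (f i.succ)}

/-- `dim λ`: the number of standard Young tableaux of shape `λ`. -/
noncomputable def YoungDiagram.dim (l : YoungDiagram) : ℕ :=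
  YoungDiagram.skewDim ⊥ l

/-- The value `FS_μ(λ)` of the Frobenius–Schur function:
`FS_μ(λ) = n(n-1)⋯(n-m+1) · dim(μ,λ)/dim λ` where `n = |λ|`, `m = |μ|`. -/
noncomputable def YoungDiagram.FS (μ l : YoungDiagram) : ℝ :=
  (∏ i ∈ Finset.range μ.card, ((l.card : ℝ) - (i : ℝ))) * (μ.skewDim l : ℝ) / (l.dim : ℝ)

/-- `(w)_{λ/μ} = ∏_{(i,j) ∈ λ∖μ} (w + j - i)`, the product of `w` shifted by the contents
of the boxes of the skew diagram `λ/μ`. -/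
noncomputable def YoungDiagram.poch (w : ℂ) (μ l : YoungDiagram) : ℂ :=
  ∏ b ∈ l.cells \ μ.cells, (w + (b.2 : ℂ) - (b.1 : ℂ))

namespace FSAux
open YoungDiagram

/-- Chains of `k` covering steps from `μ` to `l`. -/
def Chains (μ : YoungDiagram) (k : ℕ) (l : YoungDiagram) : Type :=
  {f : Fin (k + 1) → YoungDiagram //
    f 0 = μ ∧ f (Fin.last _) = l ∧
    ∀ i : Fin k, YoungDiagram.Covers (f i.castSucc) (f i.succ)}

lemma skewDim_eq_card_chains (μ l : YoungDiagram) :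
    μ.skewDim l = Nat.card (Chains μ (l.card - μ.card) l) := rfl

def Chains.snoc {μ κ : YoungDiagram} {k : ℕ} (g : Chains μ k κ) (ν : YoungDiagram)
    (hκ : Covers κ ν) : Chains μ (k + 1) ν := by
  refine ⟨Fin.snoc g.1 ν, ?_, ?_, ?_⟩
  · rw [show (0 : Fin (k + 1 + 1)) = Fin.castSucc 0 from rfl, Fin.snoc_castSucc]
    exact g.2.1
  · exact Fin.snoc_last _ _
  · intro i
    refine Fin.lastCases ?_ ?_ i
    · rw [Fin.snoc_castSucc, Fin.succ_last, Fin.snoc_last, g.2.2.1]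
      exact hκ
    · intro j
      rw [Fin.snoc_castSucc, Fin.succ_castSucc, Fin.snoc_castSucc]
      exact g.2.2.2 j

lemma finite_le (ν : YoungDiagram) : Finite {κ : YoungDiagram // κ ≤ ν} := by
  apply Finite.of_injective
    (fun κ => (⟨κ.1.cells, Finset.mem_powerset.mpr κ.2⟩ : ν.cells.powerset))
  intro a b h
  apply Subtype.ext
  exact YoungDiagram.ext (congrArg Subtype.val h)

lemma chain_le_last {k : ℕ} (f : Fin (k + 1) → YoungDiagram)
    (hs : ∀ i : Fin k, Covers (f i.castSucc) (f i.succ)) (i : Fin (k + 1)) :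
    f i ≤ f (Fin.last k) := by
  have hsm : StrictMono f := by
    refine Fin.strictMono_iff_lt_succ.mpr fun i => lt_of_le_of_ne (hs i).1 ?_
    intro h
    have := (hs i).2
    rw [h] at this
    omega
  exact hsm.monotone (Fin.le_last i)

lemma finite_chains (μ : YoungDiagram) (k : ℕ) (l : YoungDiagram) : Finite (Chains μ k l) := by
  have := finite_le l
  apply Finite.of_injective
    (fun f : Chains μ k l => (fun i => ⟨f.1 i,
      le_of_le_of_eq (chain_le_last f.1 f.2.2.2 i) f.2.2.1⟩ :
      Fin (k + 1) → {κ : YoungDiagram // κ ≤ l}))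
  intro a b h
  apply Subtype.ext
  funext i
  exact congrArg Subtype.val (congrFun h i)

lemma card_chains_succ (μ ν : YoungDiagram) (k : ℕ) (S : Finset YoungDiagram)
    (hS : ∀ κ, κ ∈ S ↔ Covers κ ν) :
    Nat.card (Chains μ (k + 1) ν) = ∑ κ ∈ S, Nat.card (Chains μ k κ) := by
  classical
  let B : (Σ κ : S, Chains μ k κ.1) → Chains μ (k + 1) ν :=
    fun x => x.2.snoc ν ((hS _).mp x.1.2)
  have hBij : Function.Bijective B := by
    constructor
    · rintro ⟨⟨κ, hκS⟩, g⟩ ⟨⟨κ', hκS'⟩, g'⟩ hB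
      have hgg : g.1 = g'.1 := by
        have h1 := congrArg (fun z => Fin.init z.1) hB
        simpa [B, Chains.snoc, Fin.init_snoc] using h1
      have hκκ : κ = κ' := by
        have a := g.2.2.1
        have b := g'.2.2.1
        rw [hgg] at a
        exact a.symm.trans b
      subst hκκ
      exact Sigma.ext rfl (heq_of_eq (Subtype.ext hgg))
    · rintro ⟨f, hf0, hfl, hfs⟩
      have hcov : Covers (f (Fin.castSucc (Fin.last k))) ν := by
        have := hfs (Fin.last k)
        rwa [Fin.succ_last, hfl] at this
      refine ⟨⟨⟨f (Fin.castSucc (Fin.last k)), (hS _).mpr hcov⟩,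
        ⟨Fin.init f, ?_, rfl, ?_⟩⟩, ?_⟩
      · show f (Fin.castSucc 0) = μ
        rwa [Fin.castSucc_zero]
      · intro i
        have := hfs i.castSucc
        rwa [Fin.succ_castSucc] at this
      · apply Subtype.ext
        show Fin.snoc (Fin.init f) ν = f
        rw [← hfl]
        exact Fin.snoc_init_self f
  haveI : ∀ κ : S, Fintype (Chains μ k κ.1) := fun κ => @Fintype.ofFinite _ (finite_chains μ k κ.1)
  calc Nat.card (Chains μ (k + 1) ν)
      = Nat.card (Σ κ : S, Chains μ k κ.1) := (Nat.card_congr (Equiv.ofBijective B hBij)).symm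
    _ = ∑ κ : S, Nat.card (Chains μ k κ.1) := by
        rw [Nat.card_eq_fintype_card, Fintype.card_sigma]
        exact Finset.sum_congr rfl fun κ _ => (Nat.card_eq_fintype_card (α := Chains μ k κ.1)).symm
    _ = ∑ κ ∈ S, Nat.card (Chains μ k κ) :=
        Finset.sum_coe_sort S (fun κ => Nat.card (Chains μ k κ))

lemma exists_covers (ν : YoungDiagram) (h : ν.cells.Nonempty) : ∃ κ, Covers κ ν := by
  obtain ⟨c, hc, hmax⟩ := Finset.exists_max_image ν.cells (fun c => c.1 + c.2) h
  refine ⟨⟨ν.cells.erase c, ?_⟩, ?_, ?_⟩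
  · intro a b hba ha
    simp only [Finset.coe_erase, Set.mem_diff, Finset.mem_coe, Set.mem_singleton_iff] at ha ⊢
    refine ⟨ν.isLowerSet hba ha.1, ?_⟩
    rintro rfl
    obtain ⟨h1, h2⟩ := Prod.le_def.mp hba
    have h3 := hmax a ha.1
    exact ha.2 (Prod.ext (by omega) (by omega)).symm
  · exact Finset.erase_subset c ν.cells
  · show ν.cells.card = (ν.cells.erase c).card + 1
    rw [Finset.card_erase_of_mem hc]
    have := Finset.card_pos.mpr h
    omega

lemma bot_card : (⊥ : YoungDiagram).card = 0 := by
  show (⊥ : YoungDiagram).cells.card = 0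
  rw [YoungDiagram.cells_bot]
  rfl

lemma nonempty_chains_bot : ∀ (n : ℕ) (ν : YoungDiagram), ν.card = n → Nonempty (Chains ⊥ n ν) := by
  intro n
  induction n with
  | zero =>
    intro ν hν
    have hb : ν = ⊥ := by
      apply YoungDiagram.ext
      rw [YoungDiagram.cells_bot]
      exact Finset.card_eq_zero.mp hν
    subst hb
    exact ⟨⟨fun _ => ⊥, rfl, rfl, fun i => i.elim0⟩⟩
  | succ k ih =>
    intro ν hν
    obtain ⟨κ, hκ⟩ := exists_covers ν (Finset.card_pos.mp (by show 0 < ν.card; omega))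
    have hκc : κ.card = k := by
      have := hκ.2
      omega
    obtain ⟨g⟩ := ih κ hκc
    exact ⟨g.snoc ν hκ⟩

lemma dim_pos (ν : YoungDiagram) : 0 < ν.dim := by
  have h : ν.dim = Nat.card (Chains ⊥ ν.card ν) := by
    show YoungDiagram.skewDim ⊥ ν = _
    rw [skewDim_eq_card_chains, bot_card, Nat.sub_zero]
  rw [h]
  haveI := finite_chains ⊥ ν.card ν
  haveI := nonempty_chains_bot ν.card ν rfl
  exact Nat.card_pos

lemma skewDim_eq_zero (μ l : YoungDiagram) (hne : μ ≠ l) (hcard : l.card ≤ μ.card) :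
    μ.skewDim l = 0 := by
  rw [skewDim_eq_card_chains, Nat.sub_eq_zero_of_le hcard]
  haveI : IsEmpty (Chains μ 0 l) := by
    constructor
    rintro ⟨f, hf0, hfl, -⟩
    exact hne (by rw [← hf0, Subsingleton.elim (0 : Fin 1) (Fin.last 0), hfl])
  exact Nat.card_of_isEmpty

lemma covers_finite (ν : YoungDiagram) : {κ : YoungDiagram | Covers κ ν}.Finite := by
  have h1 : {κ : YoungDiagram | κ ≤ ν}.Finite := Set.finite_coe_iff.mp (finite_le ν)
  exact h1.subset fun κ hκ => hκ.1

lemma skewDim_rec (μ ν : YoungDiagram) (n : ℕ) (hn : ν.card = n + 1) (hμ : μ.card ≤ n)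
    (S : Finset YoungDiagram) (hS : ∀ κ, κ ∈ S ↔ Covers κ ν) :
    μ.skewDim ν = ∑ κ ∈ S, μ.skewDim κ := by
  have h1 : ν.card - μ.card = (n - μ.card) + 1 := by omega
  rw [skewDim_eq_card_chains, h1, card_chains_succ μ ν (n - μ.card) S hS]
  refine Finset.sum_congr rfl fun κ hκ => ?_
  have hc : κ.card = n := by
    have := ((hS κ).mp hκ).2
    omega
  have h2 : κ.card - μ.card = n - μ.card := by omega
  rw [skewDim_eq_card_chains μ κ, h2]

lemma prod_shift (x : ℝ) (M : ℕ) :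
    (x - M) * ∏ i ∈ Finset.range M, (x - i) = x * ∏ i ∈ Finset.range M, (x - 1 - i) := by
  have h2 : ∏ i ∈ Finset.range (M + 1), (x - i)
      = (∏ i ∈ Finset.range M, (x - 1 - i)) * x := by
    rw [Finset.prod_range_succ' (fun i : ℕ => x - (i : ℝ)) M]
    congr 1
    · exact Finset.prod_congr rfl fun i _ => by push_cast; ring
    · simp
  have h1 : ∏ i ∈ Finset.range (M + 1), (x - i)
      = (∏ i ∈ Finset.range M, (x - i)) * (x - M) :=
    Finset.prod_range_succ _ M
  rw [mul_comm, ← h1, h2, mul_comm]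

end FSAux

open YoungDiagram in
/-- The "down" transition operator `p↓(ν,κ) = dim κ / dim ν` maps the
Frobenius–Schur function `FS_μ` restricted to diagrams with `n` boxes to
`((n+1-m)/(n+1))` times its restriction to diagrams with `n+1` boxes:
for `|μ| = m` and `|ν| = n+1`,
`∑_{κ ↗ ν} (dim κ / dim ν) FS_μ(κ) = ((n+1-m)/(n+1)) FS_μ(ν)`. -/
theorem down_operator_on_FS (μ ν : YoungDiagram) (m n : ℕ)
    (hm : μ.card = m) (hn : ν.card = n + 1) :
    ∑ᶠ (κ : YoungDiagram) (_ : Covers κ ν), ((κ.dim : ℝ) / (ν.dim : ℝ)) * μ.FS κ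
      = (((n : ℝ) + 1 - (m : ℝ)) / ((n : ℝ) + 1)) * μ.FS ν := by
  classical
  subst hm
  set S : Finset YoungDiagram := (FSAux.covers_finite ν).toFinset with hSdef
  have hS : ∀ κ, κ ∈ S ↔ Covers κ ν := fun κ => Set.Finite.mem_toFinset _
  have hLHS : (∑ᶠ (κ : YoungDiagram) (_ : Covers κ ν), ((κ.dim : ℝ) / (ν.dim : ℝ)) * μ.FS κ)
      = ∑ κ ∈ S, ((κ.dim : ℝ) / (ν.dim : ℝ)) * μ.FS κ := by
    rw [← finsum_mem_coe_finset, Set.Finite.coe_toFinset]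
    rfl
  have hcard : ∀ κ ∈ S, κ.card = n := by
    intro κ hκ
    have := ((hS κ).mp hκ).2
    omega
  by_cases hmn : μ.card ≤ n
  · -- main case
    have hνd : (ν.dim : ℝ) ≠ 0 := Nat.cast_ne_zero.mpr (FSAux.dim_pos ν).ne'
    have key := FSAux.skewDim_rec μ ν n hn hmn S hS
    have hterm : ∀ κ ∈ S, ((κ.dim : ℝ) / (ν.dim : ℝ)) * μ.FS κ
        = (∏ i ∈ Finset.range μ.card, ((n : ℝ) - (i : ℝ))) * (μ.skewDim κ : ℝ) / (ν.dim : ℝ) := by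
      intro κ hκ
      have hκd : (κ.dim : ℝ) ≠ 0 := Nat.cast_ne_zero.mpr (FSAux.dim_pos κ).ne'
      rw [YoungDiagram.FS, hcard κ hκ]
      field_simp
    rw [hLHS, Finset.sum_congr rfl hterm, ← Finset.sum_div, ← Finset.mul_sum]
    have hsum : ∑ κ ∈ S, (μ.skewDim κ : ℝ) = (μ.skewDim ν : ℝ) := by
      rw [key, Nat.cast_sum]
    rw [hsum, YoungDiagram.FS, hn]
    have hident := FSAux.prod_shift ((n : ℝ) + 1) μ.card
    have hprod : ∏ i ∈ Finset.range μ.card, ((n : ℝ) + 1 - 1 - (i : ℝ))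
        = ∏ i ∈ Finset.range μ.card, ((n : ℝ) - (i : ℝ)) :=
      Finset.prod_congr rfl fun i _ => by ring
    rw [hprod] at hident
    have hn1 : ((n : ℝ) + 1) ≠ 0 := by positivity
    have hcast : ((n + 1 : ℕ) : ℝ) = (n : ℝ) + 1 := by push_cast; ring
    rw [hcast]
    have hP0 : ∏ i ∈ Finset.range μ.card, ((n : ℝ) - (i : ℝ))
        = ((n : ℝ) + 1 - (μ.card : ℝ)) * (∏ i ∈ Finset.range μ.card, ((n : ℝ) + 1 - (i : ℝ))) / ((n : ℝ) + 1) := by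
      rw [eq_div_iff hn1, hident]; ring
    rw [hP0]
    ring
  · -- degenerate case : μ.card ≥ n + 1
    push_neg at hmn
    have hLHS0 : ∀ κ ∈ S, ((κ.dim : ℝ) / (ν.dim : ℝ)) * μ.FS κ = 0 := by
      intro κ hκ
      have hne : μ ≠ κ := by
        intro h
        have hcc := hcard κ hκ
        rw [← h] at hcc
        omega
      have h0 : μ.skewDim κ = 0 :=
        FSAux.skewDim_eq_zero μ κ hne (by rw [hcard κ hκ]; omega)
      simp [YoungDiagram.FS, h0]
    rw [hLHS, Finset.sum_eq_zero hLHS0]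
    by_cases heq : μ.card = n + 1
    · have : ((n : ℝ) + 1 - (μ.card : ℝ)) = 0 := by
        rw [heq]; push_cast; ring
      rw [this]
      simp
    · have hne : μ ≠ ν := by
        intro h
        rw [h] at heq
        exact heq hn
      have h0 : μ.skewDim ν = 0 :=
        FSAux.skewDim_eq_zero μ ν hne (by omega)
      simp [YoungDiagram.FS, h0]
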